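/- arXiv:0902.1757 — 5 statements merged into one kernel-verified Lean document; each statement's English description precedes it below -/
import Mathlib

section
/- Let ε_n → 0 with ε_n ≥ d/n for some constant d > 0 and all n, let (Δ_n) be a sequence of strictly positive reals bounded above by 2π − δ₀ for some δ₀ > 0, and suppose log Δ_n / log ε_n → c ∈ [0,∞] as n → ∞. Then (1/(−log ε_n)) · Σ_{j=1}^n e^{i j Δ_n}·e^{−2 j ε_n}/j converges, as n → ∞, to min(c,1). -/
open Filter
open scoped ENNReal Topology

lemma one_sub_cos' (x : ℝ) : 1 - Real.cos x = 2 * Real.sin (x/2)^2 := by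
  have h1 := Real.cos_sq (x/2)
  have h2 := Real.sin_sq_add_cos_sq (x/2)
  have h3 : 2 * (x/2) = x := by ring
  rw [h3] at h1
  linarith

lemma sin_half_lb' (δ₀ : ℝ) (hδ₀ : 0 < δ₀) (hδ₀' : δ₀ < 2 * Real.pi) :
    ∃ k : ℝ, 0 < k ∧ k ≤ 1 ∧
      ∀ Δ : ℝ, 0 < Δ → Δ ≤ 2 * Real.pi - δ₀ → k * Δ ≤ Real.sin (Δ / 2) := by
  have hπ := Real.pi_pos
  set s := Real.sin (min (δ₀ / 2) (Real.pi / 2)) with hs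
  have hspos : 0 < s := Real.sin_pos_of_pos_of_lt_pi (by positivity) (by
    rcases le_or_gt (δ₀/2) (Real.pi/2) with h | h
    · rw [min_eq_left h]; linarith
    · rw [min_eq_right h.le]; linarith)
  have hs1 : s ≤ 1 := Real.sin_le_one _
  refine ⟨min (1/Real.pi) (s/(2*Real.pi)), lt_min (by positivity) (by positivity), ?_, ?_⟩
  · exact (min_le_left _ _).trans (by rw [div_le_one hπ]; linarith [Real.pi_gt_three])
  intro Δ hΔ hΔ2
  rcases le_or_gt (Δ/2) (Real.pi/2) with h | h
  · calc min (1/Real.pi) (s/(2*Real.pi)) * Δ ≤ (1/Real.pi) * Δ := by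
          apply mul_le_mul_of_nonneg_right (min_le_left _ _) hΔ.le
      _ = 2/Real.pi * (Δ/2) := by ring
      _ ≤ Real.sin (Δ/2) := Real.mul_le_sin (by positivity) h
  · have hδπ : δ₀ < Real.pi := by nlinarith
    have hmin : min (δ₀/2) (Real.pi/2) = δ₀/2 := min_eq_left (by linarith)
    have h1 : Real.sin (Δ/2) = Real.sin (Real.pi - Δ/2) := (Real.sin_pi_sub _).symm
    have h2 : s ≤ Real.sin (Real.pi - Δ/2) := by
      rw [hs, hmin]
      exact Real.sin_le_sin_of_le_of_le_pi_div_two (by linarith) (by linarith) (by linarith)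
    calc min (1/Real.pi) (s/(2*Real.pi)) * Δ ≤ s/(2*Real.pi) * (2*Real.pi) := by
          apply mul_le_mul (min_le_right _ _) (by linarith) hΔ.le (by positivity)
      _ = s := by field_simp
      _ ≤ Real.sin (Δ/2) := by rw [h1]; exact h2

lemma exp_bounds' {ε : ℝ} (hε : 0 < ε) (hε2 : ε ≤ 1/2) :
    ε ≤ 1 - Real.exp (-(2*ε)) ∧ 1 - Real.exp (-(2*ε)) ≤ 2*ε ∧
      (1:ℝ)/4 ≤ Real.exp (-(2*ε)) := by
  have h1 : 1 + 2*ε ≤ Real.exp (2*ε) := by linarith [Real.add_one_le_exp (2*ε)]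
  have hpos : (0:ℝ) < Real.exp (2*ε) := Real.exp_pos _
  have hneg : Real.exp (-(2*ε)) = (Real.exp (2*ε))⁻¹ := by rw [Real.exp_neg]
  refine ⟨?_, ?_, ?_⟩
  · rw [hneg]
    have h0 : (Real.exp (2*ε))⁻¹ ≤ (1+2*ε)⁻¹ := inv_anti₀ (by linarith) h1
    have h2 : (1+2*ε)⁻¹ ≤ 1 - ε := by
      rw [inv_le_iff_one_le_mul₀ (by linarith)]
      nlinarith
    linarith
  · linarith [Real.add_one_le_exp (-(2*ε))]
  · have h4 : Real.exp (-(1:ℝ)) ≤ Real.exp (-(2*ε)) := Real.exp_le_exp.2 (by linarith)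
    have he : Real.exp 1 < 2.7182818286 := Real.exp_one_lt_d9
    have h5 : ((1:ℝ))/4 ≤ Real.exp (-(1:ℝ)) := by
      rw [Real.exp_neg]
      rw [le_inv_comm₀ (by norm_num) (Real.exp_pos 1)]
      linarith
    linarith

lemma r_bounds' (k ε Δ : ℝ) (hk : 0 < k) (hk1 : k ≤ 1)
    (hε : 0 < ε) (hε2 : ε ≤ 1/2) (hΔ : 0 < Δ)
    (hεa : ε ≤ 1 - Real.exp (-(2*ε))) (hεb : 1 - Real.exp (-(2*ε)) ≤ 2*ε)
    (hεc : (1:ℝ)/4 ≤ Real.exp (-(2*ε)))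
    (hsin : k * Δ ≤ Real.sin (Δ / 2)) :
    k * max ε Δ ≤ ‖1 - Complex.exp (Complex.I * Δ - 2 * ε)‖ ∧
      ‖1 - Complex.exp (Complex.I * Δ - 2 * ε)‖ ≤ 3 * max ε Δ := by
  set a := Real.exp (-(2*ε)) with ha
  set z := Complex.exp (Complex.I * Δ - 2 * ε) with hzdef
  have hz : z = (a:ℂ) * Complex.exp (↑Δ * Complex.I) := by
    rw [hzdef, show Complex.I * ↑Δ - 2*↑ε = ((-(2*ε) : ℝ) : ℂ) + ↑Δ * Complex.I by
      push_cast; ring, Complex.exp_add, Complex.ofReal_exp]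
  have hre : (1 - z).re = 1 - a * Real.cos Δ := by
    rw [hz, Complex.exp_mul_I]
    simp [Complex.cos_ofReal_re, Complex.sin_ofReal_re]
  have him : (1 - z).im = -(a * Real.sin Δ) := by
    rw [hz, Complex.exp_mul_I]
    simp [Complex.cos_ofReal_re, Complex.sin_ofReal_re]
  set r := ‖1 - z‖ with hrdef
  have hr0 : 0 ≤ r := norm_nonneg _
  have hr2 : r^2 = (1 - a * Real.cos Δ)^2 + (a * Real.sin Δ)^2 := by
    rw [hrdef, Complex.sq_norm, Complex.normSq_apply, hre, him]
    ring
  have hsc := Real.sin_sq_add_cos_sq Δ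
  have hcc := one_sub_cos' Δ
  set sh := Real.sin (Δ/2) with hsh
  have hsh0 : 0 ≤ sh := le_trans (by positivity) hsin
  have hshle : sh ≤ Δ/2 := Real.sin_le (by positivity)
  have ha1 : a ≤ 1 := by rw [ha]; exact Real.exp_le_one_iff.2 (by linarith)
  set co := Real.cos Δ with hco
  set si := Real.sin Δ with hsi
  clear_value a z r sh co si
  clear hz hre him hzdef ha hrdef hsh hco hsi
  have key : ∀ x y : ℝ, 0 ≤ x → 0 ≤ y → x^2 ≤ y^2 → x ≤ y := by
    intro x y hx hy h2; nlinarith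
  have hεr : ε ≤ r := by
    apply key _ _ hε.le hr0
    nlinarith [sq_nonneg sh, sq_nonneg (1 - a)]
  have hshr : sh ≤ r := by
    apply key _ _ hsh0 hr0
    nlinarith [sq_nonneg (1 - a), sq_nonneg sh]
  have hub : r ≤ 2*ε + Δ := by
    apply key _ _ hr0 (by linarith)
    nlinarith [sq_nonneg sh, sq_nonneg (1-a), sq_nonneg (Δ - 2*sh)]
  constructor
  · rcases max_cases ε Δ with ⟨h1, h2⟩ | ⟨h1, h2⟩ <;> rw [h1]
    · nlinarith
    · linarith
  · rcases max_cases ε Δ with ⟨h1, h2⟩ | ⟨h1, h2⟩ <;> rw [h1] <;> linarith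

lemma tail_bound' (z : ℂ) (ε dd : ℝ) (n : ℕ)
    (hz : ‖z‖ ≤ Real.exp (-(2*ε))) (hε : 0 < ε)
    (hεa : ε ≤ 1 - Real.exp (-(2*ε))) (hd0 : 0 < dd) (hd : dd ≤ n * ε) :
    ‖(-Complex.log (1 - z)) - ∑ j ∈ Finset.range (n+1), z^j / j‖ ≤ 1/dd := by
  set a := Real.exp (-(2*ε)) with ha
  have ha0 : 0 < a := Real.exp_pos _
  have ha1 : a < 1 := by linarith
  have hz1 : ‖z‖ < 1 := lt_of_le_of_lt hz ha1
  have hsum := Complex.hasSum_taylorSeries_neg_log hz1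
  have hsummable := hsum.summable
  have heq : (-Complex.log (1 - z)) - ∑ j ∈ Finset.range (n+1), z^j / j
      = ∑' i : ℕ, z^(i+(n+1)) / (↑(i+(n+1)) : ℂ) := by
    have h := Summable.sum_add_tsum_nat_add (f := fun j : ℕ => z^j / j) (n+1) hsummable
    rw [hsum.tsum_eq] at h
    push_cast at h ⊢
    linear_combination -h
  rw [heq]
  have hgs : Summable (fun i : ℕ => a^i / ((n:ℝ)+1)) :=
    (summable_geometric_of_lt_one ha0.le ha1).div_const _
  have hbound : ∀ i : ℕ, ‖z^(i+(n+1)) / (↑(i+(n+1)) : ℂ)‖ ≤ a^i / ((n:ℝ)+1) := by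
    intro i
    rw [norm_div, norm_pow]
    have h1 : ‖(↑(i+(n+1)) : ℂ)‖ = (i:ℝ)+(n+1) := by
      rw [Complex.norm_natCast]; push_cast; ring
    rw [h1]
    calc ‖z‖^(i+(n+1)) / ((i:ℝ)+(n+1)) ≤ a^(i+(n+1)) / ((n:ℝ)+1) := by
          apply div_le_div₀ (by positivity) (pow_le_pow_left₀ (norm_nonneg _) hz _)
            (by positivity) (by linarith)
      _ ≤ a^i / ((n:ℝ)+1) := by
          apply div_le_div_of_nonneg_right ?_ (by positivity)
          exact pow_le_pow_of_le_one ha0.le ha1.le (by omega)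
  calc ‖∑' i : ℕ, z^(i+(n+1)) / (↑(i+(n+1)) : ℂ)‖
      ≤ ∑' i : ℕ, (a^i / ((n:ℝ)+1)) := by
        apply tsum_of_norm_bounded hgs.hasSum hbound
    _ = (1-a)⁻¹ / ((n:ℝ)+1) := by
        rw [tsum_div_const, tsum_geometric_of_lt_one ha0.le ha1]
    _ ≤ 1/dd := by
        rw [div_le_div_iff₀ (by positivity) hd0, one_mul]
        have h2 : dd ≤ ((n:ℝ)+1) * ε := by nlinarith [hε.le]
        have h3 : (1-a)⁻¹ ≤ ε⁻¹ := inv_anti₀ hε (by linarith)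
        calc (1-a)⁻¹ * dd ≤ ε⁻¹ * (((n:ℝ)+1)*ε) := by
              apply mul_le_mul h3 h2 hd0.le (by positivity)
          _ ≤ (n:ℝ)+1 := by
              rw [show ε⁻¹ * (((n:ℝ)+1)*ε) = ((n:ℝ)+1) * (ε⁻¹ * ε) by ring,
                inv_mul_cancel₀ hε.ne', mul_one]

lemma min_tendsto' (t : ℕ → ℝ) (c : ℝ≥0∞)
    (hc : Tendsto (fun n => ((t n : ℝ) : EReal)) atTop (𝓝 (c : EReal))) :
    Tendsto (fun n => min 1 (t n)) atTop (𝓝 ((min c 1).toReal)) := by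
  rcases eq_or_ne c ⊤ with rfl | hne
  · have h1 : (min ⊤ 1 : ℝ≥0∞).toReal = 1 := by simp
    rw [h1]
    rw [EReal.coe_ennreal_top] at hc
    have h2 := EReal.tendsto_nhds_top_iff_real.1 hc 1
    apply Tendsto.congr' ?_ tendsto_const_nhds
    filter_upwards [h2] with n hn
    rw [min_eq_left]
    exact_mod_cast (le_of_lt (by exact_mod_cast hn))
  · have hcoe : (c : EReal) = ((c.toReal : ℝ) : EReal) := by
      rw [← EReal.toReal_coe_ennreal]
      rw [EReal.coe_toReal]
      · simp [hne]
      · simp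
    rw [hcoe] at hc
    have ht : Tendsto t atTop (𝓝 c.toReal) := EReal.tendsto_coe.1 hc
    have h6 := Tendsto.min (tendsto_const_nhds (x := (1:ℝ))) ht
    convert h6 using 2
    rw [ENNReal.toReal_min hne (by simp), min_comm]
    simp

/-- Lemma 1 of the paper: for `ε_n ≫ 1/n`, `ε_n → 0`, and `log Δ_n / log ε_n → c`,
`(1/(-log ε_n)) ∑_{j=1}^n e^{ijΔ_n} e^{-2jε_n}/j → min(c,1)`. -/
theorem sum_exp_asymptotics_eps_large
    (ε : ℕ → ℝ) (hε0 : Tendsto ε atTop (𝓝 0))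
    (d : ℝ) (hd : 0 < d) (hεlb : ∀ n : ℕ, d / n ≤ ε n)
    (Δ : ℕ → ℝ) (hΔpos : ∀ n, 0 < Δ n)
    (δ₀ : ℝ) (hδ₀ : 0 < δ₀) (hΔub : ∀ n, Δ n ≤ 2 * Real.pi - δ₀)
    (c : ℝ≥0∞)
    (hc : Tendsto (fun n => ((Real.log (Δ n) / Real.log (ε n) : ℝ) : EReal))
      atTop (𝓝 c)) :
    Tendsto (fun n => ((-Real.log (ε n))⁻¹ : ℂ) *
        ∑ j ∈ Finset.Icc 1 n, Complex.exp (Complex.I * j * Δ n) *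
          Complex.exp (-2 * j * ε n) / j)
      atTop (𝓝 (((min c 1).toReal : ℂ))) := by
  -- basic setup
  have hδ2π : δ₀ < 2 * Real.pi := by have := (hΔpos 0).trans_le (hΔub 0); linarith
  obtain ⟨k, hk, hk1, hsinlb⟩ := sin_half_lb' δ₀ hδ₀ hδ2π
  have hεpos : ∀ n : ℕ, 1 ≤ n → 0 < ε n := by
    intro n hn
    have : (0:ℝ) < d / n := div_pos hd (by exact_mod_cast hn)
    linarith [hεlb n]
  set L : ℕ → ℝ := fun n => -Real.log (ε n) with hLdef
  set z : ℕ → ℂ := fun n => Complex.exp (Complex.I * (Δ n) - 2 * (ε n)) with hzdef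
  -- L → ∞
  have hεnhds : Tendsto ε atTop (𝓝[>] 0) := by
    apply tendsto_nhdsWithin_of_tendsto_nhds_of_eventually_within _ hε0
    filter_upwards [eventually_ge_atTop 1] with n hn
    exact hεpos n hn
  have hL : Tendsto L atTop atTop := by
    have h1 := Real.tendsto_log_nhdsGT_zero.comp hεnhds
    exact tendsto_neg_atBot_atTop.comp h1
  have hLinv : Tendsto (fun n => (L n)⁻¹) atTop (𝓝 0) :=
    tendsto_inv_atTop_zero.comp hL
  -- the good event
  have hev : ∀ᶠ n in atTop, 1 ≤ n ∧ 0 < ε n ∧ ε n ≤ 1/2 ∧ 1 ≤ L n := by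
    have h1 : ∀ᶠ n in atTop, ε n < 1/2 := hε0.eventually_lt_const (by norm_num)
    have h2 : ∀ᶠ n in atTop, ε n < Real.exp (-1) :=
      hε0.eventually_lt_const (Real.exp_pos _)
    filter_upwards [h1, h2, eventually_ge_atTop 1] with n hn1 hn2 hn3
    have hp := hεpos n hn3
    refine ⟨hn3, hp, hn1.le, ?_⟩
    have := Real.log_le_log hp hn2.le
    rw [Real.log_exp] at this
    simp only [hLdef]
    linarith
  -- the sum as partial sums of the Taylor series
  have hS : ∀ n : ℕ, (∑ j ∈ Finset.Icc 1 n, Complex.exp (Complex.I * j * Δ n) *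
      Complex.exp (-2 * j * ε n) / j) = ∑ j ∈ Finset.range (n+1), (z n)^j / j := by
    intro n
    rw [show Finset.range (n+1) = insert 0 (Finset.Icc 1 n) from by ext j; simp; omega]
    rw [Finset.sum_insert (by simp)]
    rw [show ((z n)^0 / ((0:ℕ):ℂ)) = 0 by simp]
    rw [zero_add]
    apply Finset.sum_congr rfl
    intro j hj
    congr 1
    rw [← Complex.exp_add, hzdef, ← Complex.exp_nat_mul]
    congr 1
    push_cast
    ring
  -- norm of z
  have hzn : ∀ n : ℕ, ‖z n‖ = Real.exp (-(2 * ε n)) := by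
    intro n
    rw [hzdef]
    simp only []
    rw [Complex.norm_exp]
    congr 1
    simp
  -- the real sequence
  set r : ℕ → ℝ := fun n => ‖1 - z n‖ with hrdef
  set t : ℕ → ℝ := fun n => Real.log (Δ n) / Real.log (ε n) with htdef
  set a : ℕ → ℝ := fun n => (L n)⁻¹ * (-Real.log (r n)) with hadef
  -- bounds on r, eventually
  have hrbd : ∀ᶠ n in atTop, k * max (ε n) (Δ n) ≤ r n ∧ r n ≤ 3 * max (ε n) (Δ n) := by
    filter_upwards [hev] with n ⟨hn1, hn2, hn3, hn4⟩
    obtain ⟨hεa, hεb, hεc⟩ := exp_bounds' hn2 hn3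
    exact r_bounds' k (ε n) (Δ n) hk hk1 hn2 hn3 (hΔpos n) hεa hεb hεc
      (hsinlb (Δ n) (hΔpos n) (hΔub n))
  -- |a n - min 1 (t n)| ≤ C₀ / L n eventually
  set C₀ : ℝ := Real.log 3 - Real.log k with hC₀
  have habd : ∀ᶠ n in atTop, |a n - min 1 (t n)| ≤ C₀ * (L n)⁻¹ := by
    filter_upwards [hev, hrbd] with n ⟨hn1, hn2, hn3, hn4⟩ ⟨hrlo, hrhi⟩
    have hΔn := hΔpos n
    have hLpos : (0:ℝ) < L n := by linarith
    set m := max (ε n) (Δ n) with hm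
    have hmpos : 0 < m := lt_of_lt_of_le hn2 (le_max_left _ _)
    have hrpos : 0 < r n := lt_of_lt_of_le (by positivity) hrlo
    have hlog1 : Real.log (r n) ≤ Real.log 3 + Real.log m := by
      rw [← Real.log_mul (by norm_num) hmpos.ne']
      exact Real.log_le_log hrpos hrhi
    have hlog2 : Real.log k + Real.log m ≤ Real.log (r n) := by
      rw [← Real.log_mul hk.ne' hmpos.ne']
      exact Real.log_le_log (by positivity) hrlo
    have hmin : -Real.log m = min (L n) (-Real.log (Δ n)) := by
      rcases le_total (ε n) (Δ n) with h | h
      · rw [hm, max_eq_right h, min_eq_right]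
        simp only [hLdef, neg_le_neg_iff]
        exact Real.log_le_log hn2 h
      · rw [hm, max_eq_left h, min_eq_left]
        simp only [hLdef, neg_le_neg_iff]
        exact Real.log_le_log hΔn h
    have hlogε : Real.log (ε n) = -(L n) := by simp [hLdef]
    have ht' : t n = (-Real.log (Δ n)) / L n := by
      rw [htdef]
      simp only [hlogε]
      rw [div_neg, neg_div]
    have hone : (1:ℝ) = L n / L n := (div_self hLpos.ne').symm
    have hmin2 : min 1 (t n) = (-Real.log m) / L n := by
      rw [hmin, ht']
      nth_rewrite 1 [hone]
      rw [min_div_div_right hLpos.le]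
    have hdiff : a n - min 1 (t n) = (Real.log m - Real.log (r n)) / L n := by
      rw [hadef, hmin2]
      field_simp
      ring
    rw [hdiff]
    have hlk : Real.log k ≤ 0 := Real.log_nonpos hk.le hk1
    have hl3 : (0:ℝ) ≤ Real.log 3 := Real.log_nonneg (by norm_num)
    rw [abs_div, abs_of_pos hLpos, div_eq_mul_inv]
    apply mul_le_mul_of_nonneg_right _ (by positivity)
    rw [abs_le]
    constructor <;> [skip; skip] <;> rw [hC₀] <;> linarith
  -- a n → (min c 1).toReal
  have hmt := min_tendsto' t c hc
  have ha2 : Tendsto (fun n => a n - min 1 (t n)) atTop (𝓝 0) := by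
    apply squeeze_zero_norm' habd
    have := hLinv.const_mul C₀
    rwa [mul_zero] at this
  have ha : Tendsto a atTop (𝓝 ((min c 1).toReal)) := by
    have h7 := hmt.add ha2
    rw [add_zero] at h7
    apply h7.congr
    intro n
    ring
  -- complex part
  have hA : Tendsto (fun n => ((a n : ℝ) : ℂ)) atTop (𝓝 (((min c 1).toReal : ℂ))) :=
    (Complex.continuous_ofReal.tendsto _).comp ha
  set EXPR : ℕ → ℂ := fun n => ((-Real.log (ε n))⁻¹ : ℂ) *
      ∑ j ∈ Finset.Icc 1 n, Complex.exp (Complex.I * j * Δ n) *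
        Complex.exp (-2 * j * ε n) / j with hEdef
  have hBbd : ∀ᶠ n in atTop, ‖EXPR n - ((a n : ℝ) : ℂ)‖ ≤ (1/d + Real.pi) * (L n)⁻¹ := by
    filter_upwards [hev] with n ⟨hn1, hn2, hn3, hn4⟩
    have hLpos : (0:ℝ) < L n := by linarith
    obtain ⟨hεa, hεb, hεc⟩ := exp_bounds' hn2 hn3
    have hdn : d ≤ n * ε n := by
      have := hεlb n
      rw [div_le_iff₀ (by exact_mod_cast hn1 : (0:ℝ) < n)] at this
      linarith
    have htail := tail_bound' (z n) (ε n) d n (le_of_eq (hzn n)) hn2 hεa hd hdn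
    have hlog : -Complex.log (1 - z n) = ((-Real.log (r n) : ℝ) : ℂ)
        - (Complex.arg (1 - z n) : ℝ) * Complex.I := by
      rw [Complex.log]
      push_cast
      rw [hrdef]
      ring
    have hEeq : EXPR n - ((a n : ℝ) : ℂ) = (((L n)⁻¹ : ℝ) : ℂ) *
        ((∑ j ∈ Finset.range (n+1), (z n)^j / j - (-Complex.log (1 - z n)))
          + (-((Complex.arg (1 - z n) : ℝ) * Complex.I))) := by
      rw [hEdef]
      simp only []
      rw [hS n, hadef]
      push_cast
      rw [hlog]
      simp only [hLdef]
      push_cast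
      ring
    rw [hEeq]
    rw [norm_mul]
    have h8 : ‖(((L n)⁻¹ : ℝ) : ℂ)‖ = (L n)⁻¹ := by
      rw [Complex.norm_real, Real.norm_eq_abs, abs_of_pos (by positivity)]
    rw [h8, mul_comm]
    apply mul_le_mul_of_nonneg_right _ (by positivity)
    calc ‖(∑ j ∈ Finset.range (n+1), (z n)^j / j - (-Complex.log (1 - z n)))
          + (-((Complex.arg (1 - z n) : ℝ) * Complex.I))‖
        ≤ ‖∑ j ∈ Finset.range (n+1), (z n)^j / j - (-Complex.log (1 - z n))‖
          + ‖-((Complex.arg (1 - z n) : ℝ) * Complex.I)‖ := norm_add_le _ _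
      _ ≤ 1/d + Real.pi := by
          apply add_le_add
          · rw [← norm_neg]
            rw [neg_sub]
            exact htail
          · rw [norm_neg, norm_mul, Complex.norm_real, Complex.norm_I, mul_one,
              Real.norm_eq_abs]
            exact Complex.abs_arg_le_pi _
  have hB : Tendsto (fun n => EXPR n - ((a n : ℝ) : ℂ)) atTop (𝓝 0) := by
    apply squeeze_zero_norm' hBbd
    have := hLinv.const_mul (1/d + Real.pi)
    rwa [mul_zero] at this
  have hfinal := hA.add hB
  rw [add_zero] at hfinal
  apply hfinal.congr
  intro n
  ring
end

section
/- Let (Δ_n) be a sequence of strictly positive reals bounded above by 2π − δ₀ for some δ₀ > 0, and suppose −log Δ_n / log n → c ∈ [0,∞] as n → ∞. Then (1/log n) · Σ_{j=1}^n e^{i j Δ_n}/j converges, as n → ∞, to min(c,1). -/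
open Filter Finset
open scoped ENNReal Topology

lemma norm_exp_I_sub_one (x : ℝ) :
    ‖Complex.exp (x * Complex.I) - 1‖ = 2 * |Real.sin (x / 2)| := by
  have h1 : Complex.exp (x * Complex.I) - 1
      = Complex.ofReal (Real.cos x - 1) + Complex.ofReal (Real.sin x) * Complex.I := by
    rw [Complex.exp_mul_I]; push_cast; ring
  rw [h1, Complex.norm_def, Complex.normSq_add_mul_I,
    Real.abs_sin_half]
  rw [show (Real.cos x - 1) ^ 2 + Real.sin x ^ 2 = 4 * ((1 - Real.cos x) / 2) by
    nlinarith [Real.sin_sq_add_cos_sq x]]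
  rw [show (4 : ℝ) * ((1 - Real.cos x) / 2) = 2 ^ 2 * ((1 - Real.cos x) / 2) by ring,
    Real.sqrt_mul (by positivity), Real.sqrt_sq (by norm_num)]

lemma geom_bound (z : ℂ) (hz : ‖z‖ = 1) (hz1 : z ≠ 1) (t : ℕ) :
    ‖∑ i ∈ range t, z ^ i‖ ≤ 2 / ‖1 - z‖ := by
  rw [geom_sum_eq hz1, norm_div, norm_sub_rev z 1]
  gcongr
  calc ‖z ^ t - 1‖ ≤ ‖z ^ t‖ + ‖(1:ℂ)‖ := norm_sub_le _ _
    _ = 2 := by rw [norm_pow, hz]; norm_num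

lemma tail_bound (z : ℂ) (hz : ‖z‖ = 1) (hz1 : z ≠ 1) (m n : ℕ) :
    ‖∑ j ∈ Ioc m n, z ^ j / (j : ℂ)‖ ≤ 6 / (((m : ℝ) + 1) * ‖1 - z‖) := by
  have h1z : (0:ℝ) < ‖1 - z‖ := by
    rw [norm_pos_iff, sub_ne_zero]; exact fun h => hz1 h.symm
  rcases le_or_gt n m with h | hmn
  · rw [Finset.Ioc_eq_empty (by omega), Finset.sum_empty, norm_zero]
    positivity
  have key := Finset.sum_Ioc_by_parts (fun j => ((j : ℂ))⁻¹) (fun j => z ^ j) hmn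
  simp only [smul_eq_mul] at key
  have hsum : ∑ j ∈ Ioc m n, z ^ j / (j : ℂ) = ∑ j ∈ Ioc m n, ((j:ℂ))⁻¹ * z ^ j := by
    refine Finset.sum_congr rfl fun j _ => ?_
    rw [div_eq_inv_mul]
  rw [hsum, key]
  have hG : ∀ t : ℕ, ‖∑ i ∈ range t, z ^ i‖ ≤ 2 / ‖1 - z‖ := geom_bound z hz hz1
  have hfn : ‖((n:ℂ))⁻¹‖ ≤ ((m:ℝ)+1)⁻¹ := by
    rw [norm_inv, Complex.norm_natCast]
    apply inv_anti₀ (by positivity)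
    exact_mod_cast hmn
  have hfm : ‖((((m:ℕ)+1 : ℕ):ℂ))⁻¹‖ ≤ ((m:ℝ)+1)⁻¹ := by
    rw [norm_inv, Complex.norm_natCast]
    push_cast; exact le_refl _
  have hC : ‖∑ i ∈ Ioc m (n-1), ((((i+1:ℕ)):ℂ)⁻¹ - ((i:ℕ):ℂ)⁻¹) * ∑ k ∈ range (i+1), z ^ k‖
      ≤ ((m:ℝ)+1)⁻¹ * (2 / ‖1 - z‖) := by
    calc ‖∑ i ∈ Ioc m (n-1), ((((i+1:ℕ)):ℂ)⁻¹ - ((i:ℕ):ℂ)⁻¹) * ∑ k ∈ range (i+1), z ^ k‖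
        ≤ ∑ i ∈ Ioc m (n-1), ‖((((i+1:ℕ)):ℂ)⁻¹ - ((i:ℕ):ℂ)⁻¹) * ∑ k ∈ range (i+1), z ^ k‖ :=
          norm_sum_le _ _
      _ ≤ ∑ i ∈ Ioc m (n-1), (((i:ℝ))⁻¹ - (((i:ℝ))+1)⁻¹) * (2 / ‖1 - z‖) := by
          refine Finset.sum_le_sum fun i hi => ?_
          rw [norm_mul]
          have hi1 : 1 ≤ i := by simp only [Finset.mem_Ioc] at hi; omega
          have hnorm : ‖(((i+1:ℕ)):ℂ)⁻¹ - ((i:ℕ):ℂ)⁻¹‖ = ((i:ℝ))⁻¹ - (((i:ℝ))+1)⁻¹ := by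
            have he : (((i+1:ℕ)):ℂ)⁻¹ - ((i:ℕ):ℂ)⁻¹
                = -(((((i:ℝ))⁻¹ - (((i:ℝ))+1)⁻¹ : ℝ)) : ℂ) := by push_cast; ring
            rw [he, norm_neg, Complex.norm_real, Real.norm_eq_abs, abs_of_nonneg]
            have : (0:ℝ) < (i:ℝ) := by exact_mod_cast hi1
            rw [sub_nonneg]
            exact inv_anti₀ this (by linarith)
          rw [hnorm]
          have : (0:ℝ) ≤ ((i:ℝ))⁻¹ - (((i:ℝ))+1)⁻¹ := by
            have : (0:ℝ) < (i:ℝ) := by exact_mod_cast hi1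
            rw [sub_nonneg]; exact inv_anti₀ this (by linarith)
          exact mul_le_mul_of_nonneg_left (hG _) this
      _ = (∑ i ∈ Ioc m (n-1), (((i:ℝ))⁻¹ - (((i:ℝ))+1)⁻¹)) * (2 / ‖1 - z‖) := by
          rw [Finset.sum_mul]
      _ ≤ ((m:ℝ)+1)⁻¹ * (2 / ‖1 - z‖) := by
          have htel : ∑ i ∈ Ioc m (n-1), (((i:ℝ))⁻¹ - (((i:ℝ))+1)⁻¹) ≤ ((m:ℝ)+1)⁻¹ := by
            have hI : Ioc m (n-1) = Ico (m+1) n := by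
              rw [← Finset.Ico_add_one_add_one_eq_Ioc]; congr 1; omega
            rw [hI, Finset.sum_Ico_eq_sum_range]
            have := Finset.sum_range_sub' (fun k => (((m:ℝ))+1+k)⁻¹) (n - (m+1))
            calc ∑ k ∈ range (n - (m+1)), ((((m+1+k:ℕ)):ℝ)⁻¹ - ((((m+1+k:ℕ)):ℝ)+1)⁻¹)
                = ∑ k ∈ range (n - (m+1)), (((((m:ℝ))+1+(k:ℕ))⁻¹) - ((((m:ℝ))+1+((k+1:ℕ):ℕ))⁻¹)) := by
                  refine Finset.sum_congr rfl fun k _ => ?_; push_cast; ring_nf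
              _ = (((m:ℝ))+1+((0:ℕ):ℝ))⁻¹ - (((m:ℝ))+1+((n-(m+1):ℕ):ℝ))⁻¹ := this
              _ ≤ ((m:ℝ)+1)⁻¹ := by
                  have : (0:ℝ) ≤ (((m:ℝ))+1+((n-(m+1):ℕ):ℝ))⁻¹ := by positivity
                  push_cast
                  rw [add_zero]
                  linarith
          exact mul_le_mul_of_nonneg_right htel (by positivity)
  calc ‖((n:ℂ))⁻¹ * ∑ k ∈ range (n+1), z^k - ((((m+1:ℕ)):ℂ))⁻¹ * ∑ k ∈ range (m+1), z^k
        - ∑ i ∈ Ioc m (n-1), ((((i+1:ℕ)):ℂ)⁻¹ - ((i:ℕ):ℂ)⁻¹) * ∑ k ∈ range (i+1), z ^ k‖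
      ≤ ‖((n:ℂ))⁻¹ * ∑ k ∈ range (n+1), z^k‖ + ‖((((m+1:ℕ)):ℂ))⁻¹ * ∑ k ∈ range (m+1), z^k‖
        + ‖∑ i ∈ Ioc m (n-1), ((((i+1:ℕ)):ℂ)⁻¹ - ((i:ℕ):ℂ)⁻¹) * ∑ k ∈ range (i+1), z ^ k‖ := by
        refine (norm_sub_le _ _).trans ?_
        gcongr ?_ + _
        exact norm_sub_le _ _
    _ ≤ ((m:ℝ)+1)⁻¹ * (2 / ‖1 - z‖) + ((m:ℝ)+1)⁻¹ * (2 / ‖1 - z‖)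
        + ((m:ℝ)+1)⁻¹ * (2 / ‖1 - z‖) := by
        have h1 : ‖((n:ℂ))⁻¹ * ∑ k ∈ range (n+1), z^k‖ ≤ ((m:ℝ)+1)⁻¹ * (2 / ‖1 - z‖) := by
          rw [norm_mul]
          exact mul_le_mul hfn (hG _) (norm_nonneg _) (by positivity)
        have h2 : ‖((((m+1:ℕ)):ℂ))⁻¹ * ∑ k ∈ range (m+1), z^k‖ ≤ ((m:ℝ)+1)⁻¹ * (2 / ‖1 - z‖) := by
          rw [norm_mul]
          exact mul_le_mul hfm (hG _) (norm_nonneg _) (by positivity)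
        exact add_le_add (add_le_add h1 h2) hC
    _ = 6 / (((m : ℝ) + 1) * ‖1 - z‖) := by
        field_simp; ring

lemma key_bound (θ : ℝ) (hθ : 0 < θ) (K : ℝ) (hK : 0 < K) (hK1 : K ≤ 1)
    (hKθ : K * θ ≤ ‖1 - Complex.exp (θ * Complex.I)‖) (n : ℕ) (hn : 1 ≤ n) :
    ‖(∑ j ∈ Finset.Icc 1 n, Complex.exp (Complex.I * j * θ) / j)
      - ((min (max (-Real.log θ) 0) (Real.log n) : ℝ) : ℂ)‖ ≤ 10 / K := by
  set z := Complex.exp (θ * Complex.I) with hzdef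
  have hz : ‖z‖ = 1 := Complex.norm_exp_ofReal_mul_I θ
  have h1z : (0:ℝ) < ‖1 - z‖ := lt_of_lt_of_le (by positivity) hKθ
  have hz1 : z ≠ 1 := by
    intro h
    rw [h, sub_self, norm_zero] at h1z
    exact lt_irrefl 0 h1z
  have hexp : ∀ j : ℕ, Complex.exp (Complex.I * j * θ) = z ^ j := by
    intro j
    rw [hzdef, ← Complex.exp_nat_mul]
    congr 1
    ring
  have hnormj : ∀ j : ℕ, ‖z ^ j - 1‖ ≤ j * θ := by
    intro j
    have hzj : z ^ j = Complex.exp (((j * θ : ℝ) : ℂ) * Complex.I) := by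
      rw [hzdef, ← Complex.exp_nat_mul]
      congr 1
      push_cast
      ring
    rw [hzj, norm_exp_I_sub_one]
    calc 2 * |Real.sin (j * θ / 2)| ≤ 2 * |j * θ / 2| := by
          have := Real.abs_sin_le_abs (x := j * θ / 2)
          linarith
      _ = j * θ := by rw [abs_of_nonneg (by positivity)]; ring
  set m := min n ⌊1/θ⌋₊ with hmdef
  have hmn : m ≤ n := min_le_left _ _
  have hmfl : m ≤ ⌊1/θ⌋₊ := min_le_right _ _
  have hm_inv : (m:ℝ) ≤ 1/θ := by
    calc (m:ℝ) ≤ (⌊1/θ⌋₊ : ℝ) := by exact_mod_cast hmfl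
      _ ≤ 1/θ := Nat.floor_le (by positivity)
  have hmθ : (m:ℝ) * θ ≤ 1 := by
    rw [← le_div_iff₀ hθ] at *
    linarith [hm_inv]
  set H : ℝ := ∑ j ∈ Ioc 0 m, ((j:ℝ))⁻¹ with hHdef
  set T : ℝ := min (max (-Real.log θ) 0) (Real.log n) with hTdef
  have hIcc : Finset.Icc 1 n = Finset.Ioc 0 n := rfl
  have hsplit : ∑ j ∈ Finset.Ioc 0 n, z ^ j / (j:ℂ)
      = (∑ j ∈ Finset.Ioc 0 m, z ^ j / (j:ℂ)) + ∑ j ∈ Finset.Ioc m n, z ^ j / (j:ℂ) :=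
    (Finset.sum_Ioc_consecutive _ (Nat.zero_le m) hmn).symm
  have hhead : ‖(∑ j ∈ Finset.Ioc 0 m, z ^ j / (j:ℂ)) - ((H:ℝ):ℂ)‖ ≤ 1 := by
    have hHc : ((H:ℝ):ℂ) = ∑ j ∈ Finset.Ioc 0 m, ((j:ℂ))⁻¹ := by
      rw [hHdef]
      push_cast
      rfl
    rw [hHc, ← Finset.sum_sub_distrib]
    calc ‖∑ j ∈ Finset.Ioc 0 m, (z ^ j / (j:ℂ) - ((j:ℂ))⁻¹)‖
        ≤ ∑ j ∈ Finset.Ioc 0 m, ‖z ^ j / (j:ℂ) - ((j:ℂ))⁻¹‖ := norm_sum_le _ _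
      _ ≤ ∑ j ∈ Finset.Ioc 0 m, θ := by
          refine Finset.sum_le_sum fun j hj => ?_
          have hj1 : 1 ≤ j := by simp only [Finset.mem_Ioc] at hj; omega
          have hj0 : ((j:ℂ)) ≠ 0 := by
            exact_mod_cast Nat.cast_ne_zero.mpr (by omega)
          have heq : z ^ j / (j:ℂ) - ((j:ℂ))⁻¹ = (z ^ j - 1) / (j:ℂ) := by
            field_simp
          rw [heq, norm_div, Complex.norm_natCast]
          rw [div_le_iff₀ (by exact_mod_cast hj1)]
          calc ‖z ^ j - 1‖ ≤ j * θ := hnormj j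
            _ = θ * j := by ring
      _ = m * θ := by rw [Finset.sum_const, Nat.card_Ioc]; simp [nsmul_eq_mul]
      _ ≤ 1 := hmθ
  have htail : ‖∑ j ∈ Finset.Ioc m n, z ^ j / (j:ℂ)‖ ≤ 6 / K := by
    rcases eq_or_lt_of_le hmn with h | h
    · rw [h, Finset.Ioc_self, Finset.sum_empty, norm_zero]
      positivity
    · have hmf : m = ⌊1/θ⌋₊ := by omega
      have h1 : 1/θ < (m:ℝ) + 1 := by
        rw [hmf]
        exact_mod_cast Nat.lt_floor_add_one (1/θ)
      have h2 : (1:ℝ) ≤ ((m:ℝ) + 1) * θ := by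
        rw [div_lt_iff₀ hθ] at h1
        linarith
      refine (tail_bound z hz hz1 m n).trans ?_
      rw [div_le_div_iff₀ (by positivity) hK]
      calc 6 * K = 6 * (K * 1) := by ring
        _ ≤ 6 * (K * (((m:ℝ) + 1) * θ)) := by
            have hKnn : (0:ℝ) ≤ K := hK.le
            nlinarith
        _ = ((m:ℝ) + 1) * (K * θ) * 6 := by ring
        _ ≤ ((m:ℝ) + 1) * ‖1 - z‖ * 6 := by
            have : (0:ℝ) ≤ (m:ℝ) + 1 := by positivity
            nlinarith
        _ = 6 * (((m:ℝ) + 1) * ‖1 - z‖) := by ring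
  have hHT : |H - T| ≤ 2 := by
    have hlogn : (0:ℝ) ≤ Real.log n := Real.log_nonneg (by exact_mod_cast hn)
    rcases Nat.eq_zero_or_pos m with hm0 | hm1
    · have hfl0 : ⌊1/θ⌋₊ = 0 := by omega
      have : 1/θ < 1 := by
        have := Nat.floor_eq_zero.mp hfl0
        exact this
      have hθ1 : 1 < θ := by
        rw [div_lt_one hθ] at this
        exact this
      have hmax : max (-Real.log θ) 0 = 0 := by
        rw [max_eq_right]
        simp only [neg_nonpos]
        exact (Real.log_pos hθ1).le
      have hT0 : T = 0 := by rw [hTdef, hmax, min_eq_left hlogn]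
      have hH0 : H = 0 := by rw [hHdef, hm0]; simp
      rw [hT0, hH0]
      norm_num
    · -- m ≥ 1
      have hm1R : (1:ℝ) ≤ (m:ℝ) := by exact_mod_cast hm1
      have hHharm : H = ((harmonic m : ℚ) : ℝ) := by
        rw [hHdef, harmonic_eq_sum_Icc]
        push_cast
        rfl
      have hH1 : Real.log ((m:ℝ)+1) ≤ H := by
        rw [hHharm]
        have := log_add_one_le_harmonic m
        push_cast at this ⊢
        linarith
      have hH2 : H ≤ 1 + Real.log m := by
        rw [hHharm]
        exact harmonic_le_one_add_log m
      have hlogm_H : Real.log m ≤ H := by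
        refine le_trans ?_ hH1
        exact Real.log_le_log (by positivity) (by linarith)
      have hlogm_T : Real.log m ≤ T := by
        rw [hTdef]
        refine le_min (le_max_of_le_left ?_) ?_
        · rw [← Real.log_inv θ]
          exact Real.log_le_log (by positivity) (by rw [inv_eq_one_div]; exact hm_inv)
        · exact Real.log_le_log (by positivity) (by exact_mod_cast hmn)
      have hT_ub : T ≤ Real.log m + 1 := by
        have hlog2 : Real.log 2 ≤ 1 := by
          have := Real.log_le_sub_one_of_pos (by norm_num : (0:ℝ) < 2)
          linarith
        have hlogm1 : Real.log ((m:ℝ)+1) ≤ Real.log m + 1 := by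
          calc Real.log ((m:ℝ)+1) ≤ Real.log (2*m) :=
                Real.log_le_log (by positivity) (by linarith)
            _ = Real.log 2 + Real.log m := Real.log_mul (by norm_num) (by positivity)
            _ ≤ Real.log m + 1 := by linarith
        rcases eq_or_lt_of_le hmn with h | h
        · -- m = n
          calc T ≤ Real.log n := min_le_right _ _
            _ = Real.log m := by rw [h]
            _ ≤ Real.log m + 1 := by linarith
        · -- m < n, so m = floor
          have hmf : m = ⌊1/θ⌋₊ := by omega
          have h1 : 1/θ < (m:ℝ) + 1 := by
            rw [hmf]
            exact_mod_cast Nat.lt_floor_add_one (1/θ)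
          calc T ≤ max (-Real.log θ) 0 := min_le_left _ _
            _ ≤ Real.log ((m:ℝ)+1) := by
                refine max_le ?_ ?_
                · rw [← Real.log_inv θ, inv_eq_one_div]
                  exact Real.log_le_log (by positivity) h1.le
                · exact Real.log_nonneg (by linarith)
            _ ≤ Real.log m + 1 := hlogm1
      rw [abs_le]
      constructor
      · linarith
      · linarith
  -- combine
  rw [hIcc]
  have hrw : ∀ j ∈ Finset.Ioc 0 n, Complex.exp (Complex.I * j * θ) / j = z ^ j / (j:ℂ) := by
    intro j _
    rw [hexp j]
  rw [Finset.sum_congr rfl hrw, hsplit]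
  have hfinal : (∑ j ∈ Finset.Ioc 0 m, z ^ j / (j:ℂ)) + (∑ j ∈ Finset.Ioc m n, z ^ j / (j:ℂ)) - ((T:ℝ):ℂ)
      = ((∑ j ∈ Finset.Ioc 0 m, z ^ j / (j:ℂ)) - ((H:ℝ):ℂ)) + (∑ j ∈ Finset.Ioc m n, z ^ j / (j:ℂ))
        + (((H - T : ℝ)):ℂ) := by
    push_cast
    ring
  rw [hfinal]
  have hnorm3 : ‖(((H - T : ℝ)):ℂ)‖ ≤ 2 := by
    rw [Complex.norm_real, Real.norm_eq_abs]
    exact hHT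
  calc ‖((∑ j ∈ Finset.Ioc 0 m, z ^ j / (j:ℂ)) - ((H:ℝ):ℂ)) + (∑ j ∈ Finset.Ioc m n, z ^ j / (j:ℂ))
        + (((H - T : ℝ)):ℂ)‖
      ≤ ‖((∑ j ∈ Finset.Ioc 0 m, z ^ j / (j:ℂ)) - ((H:ℝ):ℂ)) + (∑ j ∈ Finset.Ioc m n, z ^ j / (j:ℂ))‖
        + ‖(((H - T : ℝ)):ℂ)‖ := norm_add_le _ _
    _ ≤ ‖(∑ j ∈ Finset.Ioc 0 m, z ^ j / (j:ℂ)) - ((H:ℝ):ℂ)‖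
        + ‖∑ j ∈ Finset.Ioc m n, z ^ j / (j:ℂ)‖ + ‖(((H - T : ℝ)):ℂ)‖ := by
        gcongr
        exact norm_add_le _ _
    _ ≤ 1 + 6/K + 2 := by gcongr
    _ ≤ 10 / K := by
        have h34 : (3:ℝ) ≤ 4/K := by
          rw [le_div_iff₀ hK]
          linarith
        calc (1:ℝ) + 6/K + 2 = 3 + 6/K := by ring
          _ ≤ 4/K + 6/K := by linarith
          _ = 10/K := by ring

lemma min_max_div (a L : ℝ) (hL : 0 < L) :
    min (max a 0) L / L = min (max (a / L) 0) 1 := by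
  rcases le_total a 0 with h | h
  · rw [max_eq_right h, max_eq_right (by rw [div_nonpos_iff]; right; exact ⟨h, hL.le⟩)]
    rw [min_eq_left hL.le, zero_div, min_eq_left zero_le_one]
  · rw [max_eq_left h, max_eq_left (by positivity : (0:ℝ) ≤ a / L)]
    rcases le_total a L with h2 | h2
    · rw [min_eq_left h2, min_eq_left ((div_le_one hL).mpr h2)]
    · rw [min_eq_right h2, min_eq_right ((one_le_div hL).mpr h2), div_self hL.ne']

lemma K_lower (x₀ θ K : ℝ) (hx₀pos : 0 < x₀) (hx₀lt : x₀ < Real.pi)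
    (hθpos : 0 < θ) (hθub : θ ≤ 2 * x₀) (hKle : K ≤ Real.sin x₀ / x₀) :
    K * θ ≤ ‖1 - Complex.exp ((θ : ℂ) * Complex.I)‖ := by
  have hsinx₀ : 0 < Real.sin x₀ := Real.sin_pos_of_pos_of_lt_pi hx₀pos hx₀lt
  set t : ℝ := (θ / 2) / x₀ with htdef
  have ht0 : 0 ≤ t := by positivity
  have ht1 : t ≤ 1 := by
    rw [htdef, div_le_one hx₀pos]
    linarith
  have hconc := strictConcaveOn_sin_Icc.concaveOn.2
    (Set.mem_Icc.mpr ⟨le_refl 0, Real.pi_pos.le⟩)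
    (Set.mem_Icc.mpr ⟨hx₀pos.le, hx₀lt.le⟩)
    (by linarith : (0:ℝ) ≤ 1 - t) ht0 (by ring)
  simp only [smul_eq_mul, Real.sin_zero, mul_zero, zero_add] at hconc
  have harg : t * x₀ = θ / 2 := by
    rw [htdef]
    field_simp
  rw [harg] at hconc
  rw [norm_sub_rev, norm_exp_I_sub_one]
  have habs : Real.sin (θ/2) ≤ |Real.sin (θ/2)| := le_abs_self _
  have : K * θ ≤ 2 * (t * Real.sin x₀) := by
    have h2 : 2 * (t * Real.sin x₀) = θ * (Real.sin x₀ / x₀) := by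
      rw [htdef]
      field_simp
    rw [h2]
    calc K * θ = θ * K := by ring
      _ ≤ θ * (Real.sin x₀ / x₀) := mul_le_mul_of_nonneg_left hKle hθpos.le
  linarith

/-- Lemma 2 of the paper: if `-log Δ_n / log n → c` then
`(1/log n) ∑_{j=1}^n e^{ijΔ_n}/j → min(c,1)`. -/
theorem sum_exp_asymptotics_eps_small
    (Δ : ℕ → ℝ) (hΔpos : ∀ n, 0 < Δ n)
    (δ₀ : ℝ) (hδ₀ : 0 < δ₀) (hΔub : ∀ n, Δ n ≤ 2 * Real.pi - δ₀)
    (c : ℝ≥0∞)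
    (hc : Tendsto (fun n => ((-Real.log (Δ n) / Real.log n : ℝ) : EReal))
      atTop (𝓝 c)) :
    Tendsto (fun n : ℕ => ((Real.log n : ℂ))⁻¹ *
        ∑ j ∈ Finset.Icc 1 n, Complex.exp (Complex.I * j * Δ n) / j)
      atTop (𝓝 (((min c 1).toReal : ℂ))) := by
  -- setup constants
  have h2π : (0:ℝ) < 2 * Real.pi - δ₀ := lt_of_lt_of_le (hΔpos 0) (hΔub 0)
  set x₀ : ℝ := Real.pi - δ₀ / 2 with hx₀def
  have hx₀pos : 0 < x₀ := by rw [hx₀def]; linarith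
  have hx₀lt : x₀ < Real.pi := by rw [hx₀def]; linarith
  have hsinx₀ : 0 < Real.sin x₀ := Real.sin_pos_of_pos_of_lt_pi hx₀pos hx₀lt
  have hub2 : ∀ n, Δ n ≤ 2 * x₀ := by
    intro n
    rw [hx₀def]
    have := hΔub n
    linarith
  set K : ℝ := min (Real.sin x₀ / x₀) 1 with hKdef
  have hK : 0 < K := lt_min (div_pos hsinx₀ hx₀pos) one_pos
  have hK1 : K ≤ 1 := min_le_right _ _
  have hKle : K ≤ Real.sin x₀ / x₀ := min_le_left _ _
  have hKθ : ∀ n : ℕ, K * Δ n ≤ ‖1 - Complex.exp ((Δ n : ℂ) * Complex.I)‖ :=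
    fun n => K_lower x₀ (Δ n) K hx₀pos hx₀lt (hΔpos n) (hub2 n) hKle
  clear hKdef
  clear_value K
  -- limit of the real target
  set r : ℕ → ℝ := fun n => -Real.log (Δ n) / Real.log n with hrdef
  set t : ℕ → ℝ := fun n => min (max (r n) 0) 1 with htdef
  set L : ℝ := (min c 1).toReal with hLdef
  have ht_lim : Tendsto t atTop (𝓝 L) := by
    by_cases hctop : c = ⊤
    · have hL1 : L = 1 := by
        rw [hLdef, hctop, min_eq_right le_top, ENNReal.toReal_one]
      rw [hL1]
      rw [hctop, EReal.coe_ennreal_top] at hc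
      have hev := (EReal.tendsto_nhds_top_iff_real.mp hc) 1
      refine Tendsto.congr' ?_ tendsto_const_nhds
      filter_upwards [hev] with n hn
      have hn' : (1:ℝ) < r n := EReal.coe_lt_coe_iff.mp hn
      rw [htdef]
      simp only
      rw [min_eq_right]
      exact le_max_of_le_left hn'.le
    · have hne_top : (c : EReal) ≠ ⊤ := by
        simp only [ne_eq, EReal.coe_ennreal_eq_top_iff]
        exact hctop
      have hc' : (c : EReal) = ((c.toReal : ℝ) : EReal) := by
        rw [← EReal.coe_toReal hne_top (EReal.coe_ennreal_ne_bot c), EReal.toReal_coe_ennreal]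
      rw [hc'] at hc
      have hr_lim : Tendsto r atTop (𝓝 c.toReal) := EReal.tendsto_coe.mp hc
      have h1 : Tendsto t atTop (𝓝 (min (max c.toReal 0) 1)) :=
        (hr_lim.max tendsto_const_nhds).min tendsto_const_nhds
      have h2 : min (max c.toReal 0) 1 = L := by
        rw [max_eq_left ENNReal.toReal_nonneg, hLdef]
        rcases le_total c 1 with h | h
        · rw [min_eq_left h, min_eq_left]
          calc c.toReal ≤ (1:ℝ≥0∞).toReal := ENNReal.toReal_mono ENNReal.one_ne_top h
            _ = 1 := ENNReal.toReal_one
        · rw [min_eq_right h, ENNReal.toReal_one, min_eq_right]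
          calc (1:ℝ) = (1:ℝ≥0∞).toReal := ENNReal.toReal_one.symm
            _ ≤ c.toReal := ENNReal.toReal_mono hctop h
      rw [← h2]
      exact h1
  -- difference tends to zero
  set f : ℕ → ℂ := fun n => ((Real.log n : ℂ))⁻¹ *
    ∑ j ∈ Finset.Icc 1 n, Complex.exp (Complex.I * j * Δ n) / j with hfdef
  have hdiff : Tendsto (fun n => f n - ((t n : ℝ) : ℂ)) atTop (𝓝 0) := by
    apply squeeze_zero_norm' (a := fun n : ℕ => (10 / K) * (Real.log n)⁻¹)
    · filter_upwards [eventually_ge_atTop 2] with n hn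
      have hn1 : 1 ≤ n := by omega
      have hlogpos : 0 < Real.log n := Real.log_pos (by exact_mod_cast hn)
      set Tn : ℝ := min (max (-Real.log (Δ n)) 0) (Real.log n) with hTndef
      have ht_eq : t n = Tn / Real.log n := by
        rw [hTndef, min_max_div _ _ hlogpos]
      have hfe : f n - ((t n : ℝ) : ℂ) = ((Real.log n : ℂ))⁻¹ *
          ((∑ j ∈ Finset.Icc 1 n, Complex.exp (Complex.I * j * Δ n) / j) - ((Tn : ℝ) : ℂ)) := by
        rw [hfdef]
        simp only
        rw [ht_eq]
        push_cast
        have hlogC : ((Real.log n : ℂ)) ≠ 0 := by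
          exact_mod_cast hlogpos.ne'
        field_simp
        have hs : ∀ x : ℕ, Complex.exp (Complex.I * x * Δ n) = Complex.exp (Complex.I * Δ n * x) :=
          fun x => by ring_nf
        simp only [hs]
      rw [hfe, norm_mul]
      have h1 : ‖((Real.log n : ℂ))⁻¹‖ = (Real.log n)⁻¹ := by
        rw [norm_inv, Complex.norm_real, Real.norm_eq_abs, abs_of_pos hlogpos]
      rw [h1, mul_comm]
      have h2 := key_bound (Δ n) (hΔpos n) K hK hK1 (hKθ n) n hn1
      gcongr
    · have hlog : Tendsto (fun n : ℕ => Real.log n) atTop atTop :=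
        Real.tendsto_log_atTop.comp tendsto_natCast_atTop_atTop
      have := hlog.inv_tendsto_atTop
      simpa using this.const_mul (10 / K)
  -- combine
  have ht_limC : Tendsto (fun n => ((t n : ℝ) : ℂ)) atTop (𝓝 ((L : ℝ) : ℂ)) :=
    (Complex.continuous_ofReal.tendsto L).comp ht_lim
  have hsum := hdiff.add ht_limC
  rw [zero_add] at hsum
  refine hsum.congr fun n => ?_
  ring
end

section
/- Let n ≥ 2 and let p₁ < p₂ < … < p_n be the first n prime numbers. Let a, b ≥ 1 be integers and let k = (k₁,…,k_n) ∈ ℤⁿ be nonzero with Σ_{i : k_i > 0} k_i ≤ a and Σ_{i : k_i < 0} (−k_i) ≤ b. Then |Σ_{i=1}^n k_i · log p_i| ≥ n^{−2·max(a,b)}. -/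
lemma my_sq_le_two_pow : ∀ m : ℕ, 4 ≤ m → m ^ 2 ≤ 2 ^ m := by
  intro m hm
  induction m with
  | zero => omega
  | succ m ih =>
    rcases Nat.lt_or_ge m 4 with h | h
    · interval_cases m <;> first | omega | norm_num
    · have h1 := ih h
      have h2 : (m + 1) ^ 2 ≤ 2 * m ^ 2 := by nlinarith
      have h3 : 2 ^ (m + 1) = 2 * 2 ^ m := by ring
      omega

lemma my_pow_ineq : ∀ m : ℕ, 5 ≤ m → 2 * m ^ (2 * m) ≤ 2 ^ (m ^ 2) := by
  intro m hm
  induction m with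
  | zero => omega
  | succ m ih =>
    rcases Nat.lt_or_ge m 5 with h | h
    · interval_cases m <;> first | omega | norm_num
    · have h1 := ih h
      have hsq : (m + 1) ^ 2 ≤ 2 * m ^ 2 := by nlinarith
      have h5 : m ^ 2 ≤ 2 ^ m := my_sq_le_two_pow m (by omega)
      have h2 : (m + 1) ^ (2 * (m + 1)) = ((m + 1) ^ 2) ^ (m + 1) := pow_mul _ 2 (m+1)
      have h3 : ((m + 1) ^ 2) ^ (m + 1) ≤ (2 * m ^ 2) ^ (m + 1) :=
        Nat.pow_le_pow_left hsq _
      have h4 : 2 * (2 * m ^ 2) ^ (m + 1) = 2 ^ (m + 1) * ((2 * m ^ (2 * m)) * m ^ 2) := by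
        rw [mul_pow, ← pow_mul]; ring
      have h6 : 2 ^ (m + 1) * ((2 * m ^ (2 * m)) * m ^ 2) ≤ 2 ^ (m + 1) * (2 ^ (m ^ 2) * 2 ^ m) := by
        gcongr
      have h7 : 2 ^ (m + 1) * (2 ^ (m ^ 2) * 2 ^ m) = 2 ^ ((m + 1) ^ 2) := by
        rw [← pow_add, ← pow_add]; ring_nf
      calc 2 * (m + 1) ^ (2 * (m + 1)) = 2 * ((m + 1) ^ 2) ^ (m + 1) := by rw [h2]
        _ ≤ 2 * (2 * m ^ 2) ^ (m + 1) := by gcongr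
        _ = 2 ^ (m + 1) * ((2 * m ^ (2 * m)) * m ^ 2) := h4
        _ ≤ 2 ^ (m + 1) * (2 ^ (m ^ 2) * 2 ^ m) := h6
        _ = 2 ^ ((m + 1) ^ 2) := h7

lemma my_cheb (n : ℕ) (hn : 4 ≤ n) :
    4 ^ n < (2 * n) ^ (Nat.count Nat.Prime (2 * n + 1) + 1) := by
  have h1 : 4 ^ n < n * n.centralBinom := Nat.four_pow_lt_mul_centralBinom n hn
  have key : n.centralBinom ≤ (2 * n) ^ Nat.count Nat.Prime (2 * n + 1) := by
    rw [← Nat.prod_pow_factorization_centralBinom n, Nat.count_eq_card_filter_range]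
    rw [← Finset.prod_filter_mul_prod_filter_not (Finset.range (2 * n + 1)) Nat.Prime]
    have h0 : (∏ p ∈ (Finset.range (2 * n + 1)).filter (fun p => ¬ Nat.Prime p),
        p ^ (n.centralBinom).factorization p) = 1 := by
      apply Finset.prod_eq_one
      intro p hp
      rw [Nat.factorization_eq_zero_of_not_prime _ (Finset.mem_filter.mp hp).2, pow_zero]
    rw [h0, mul_one]
    calc (∏ p ∈ (Finset.range (2 * n + 1)).filter Nat.Prime,
          p ^ (n.centralBinom).factorization p)
        ≤ ∏ _p ∈ (Finset.range (2 * n + 1)).filter Nat.Prime, (2 * n) := by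
          apply Finset.prod_le_prod' 
          intro p _
          exact Nat.pow_factorization_choose_le (by omega)
      _ = (2 * n) ^ ((Finset.range (2 * n + 1)).filter Nat.Prime).card :=
          Finset.prod_const _
  calc 4 ^ n < n * n.centralBinom := h1
    _ ≤ (2 * n) * (2 * n) ^ Nat.count Nat.Prime (2 * n + 1) := by
        apply Nat.mul_le_mul (by omega) key
    _ = (2 * n) ^ (Nat.count Nat.Prime (2 * n + 1) + 1) := by rw [pow_succ]; ring

lemma my_count_ge (m : ℕ) (hm : 2 ≤ m) : m ≤ Nat.count Nat.Prime (m ^ 2 + 1) := by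
  rcases Nat.lt_or_ge m 5 with h | h
  · interval_cases m
    · show 2 ≤ Nat.count Nat.Prime 5; decide
    · show 3 ≤ Nat.count Nat.Prime 10; decide
    · show 4 ≤ Nat.count Nat.Prime 17; decide
  · set n := m ^ 2 / 2 with hn
    have hn4 : 4 ≤ n := by
      have : 25 ≤ m ^ 2 := by nlinarith
      omega
    have h2n : 2 * n + 1 ≤ m ^ 2 + 1 := by omega
    have hm2 : m ^ 2 ≤ 2 * n + 1 := by omega
    by_contra hc
    push_neg at hc
    have hcount : Nat.count Nat.Prime (2 * n + 1) + 1 ≤ m := by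
      have := Nat.count_monotone Nat.Prime h2n
      omega
    have hb : (2 * n) ^ (Nat.count Nat.Prime (2 * n + 1) + 1) ≤ m ^ (2 * m) := by
      calc (2 * n) ^ (Nat.count Nat.Prime (2 * n + 1) + 1)
          ≤ (2 * n) ^ m := Nat.pow_le_pow_right (by omega) hcount
        _ ≤ (m ^ 2) ^ m := Nat.pow_le_pow_left (by omega) m
        _ = m ^ (2 * m) := (pow_mul m 2 m).symm
    have hch := my_cheb n hn4
    have hpi := my_pow_ineq m h
    have h4 : 2 ^ (m ^ 2) ≤ 2 * 4 ^ n := by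
      have : (2 : ℕ) ^ (m ^ 2) ≤ 2 ^ (2 * n + 1) := Nat.pow_le_pow_right (by omega) hm2
      calc (2:ℕ) ^ (m ^ 2) ≤ 2 ^ (2 * n + 1) := this
        _ = 2 * 4 ^ n := by rw [pow_succ, pow_mul]; ring_nf
    have : 2 * 4 ^ n < 2 * m ^ (2 * m) := by
      have := lt_of_lt_of_le hch hb
      omega
    omega

lemma my_nth_prime_le (m : ℕ) (hm : 2 ≤ m) : Nat.nth Nat.Prime (m - 1) ≤ m ^ 2 := by
  have h := my_count_ge m hm
  have : Nat.nth Nat.Prime (m - 1) < m ^ 2 + 1 :=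
    Nat.nth_lt_of_lt_count (by omega)
  omega

lemma my_factorization (n : ℕ) (e : Fin n → ℕ) (j : Fin n) :
    (∏ i : Fin n, (Nat.nth Nat.Prime i.val) ^ (e i)).factorization (Nat.nth Nat.Prime j.val) = e j := by
  rw [Nat.factorization_prod (fun i _ => pow_ne_zero _ (Nat.prime_nth_prime i.val).pos.ne')]
  rw [Finsupp.finset_sum_apply]
  rw [Finset.sum_eq_single j]
  · rw [(Nat.prime_nth_prime j.val).factorization_pow, Finsupp.single_eq_same]
  · intro i _ hij
    rw [(Nat.prime_nth_prime i.val).factorization_pow, Finsupp.single_eq_of_ne']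
    exact fun h => hij (Fin.ext (Nat.nth_injective Nat.infinite_setOf_prime h))
  · simp

/-- Lemma 4 of the paper: if `p₁ < … < p_n` are the first `n` primes and `k ∈ ℤⁿ` is nonzero
with positive part bounded by `a` and negative part bounded by `b`, then
`|∑ kᵢ log pᵢ| ≥ n^{-2 max(a,b)}`. -/
theorem log_primes_linear_combination_lower_bound
    (n : ℕ) (hn : 2 ≤ n) (a b : ℕ) (ha : 1 ≤ a) (hb : 1 ≤ b)
    (k : Fin n → ℤ) (hk : k ≠ 0)
    (hpos : (∑ i ∈ Finset.univ.filter fun i => 0 < k i, k i) ≤ (a : ℤ))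
    (hneg : (∑ i ∈ Finset.univ.filter fun i => k i < 0, -k i) ≤ (b : ℤ)) :
    (n : ℝ) ^ (-(2 * (max a b : ℤ))) ≤
      |∑ i, (k i : ℝ) * Real.log (Nat.nth Nat.Prime i)| := by
  classical
  set p : Fin n → ℕ := fun i => Nat.nth Nat.Prime i.val with hpdef
  set e : Fin n → ℕ := fun i => (k i).toNat with hedef
  set f : Fin n → ℕ := fun i => (-(k i)).toNat with hfdef
  set P : ℕ := ∏ i, p i ^ e i with hPdef
  set Q : ℕ := ∏ i, p i ^ f i with hQdef
  set c : ℕ := 2 * max a b with hcdef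
  have hp2 : ∀ i, 2 ≤ p i := fun i => (Nat.prime_nth_prime i.val).two_le
  have hP1 : 1 ≤ P := Finset.one_le_prod' fun i _ => Nat.one_le_pow _ _ (by have := hp2 i; omega)
  have hQ1 : 1 ≤ Q := Finset.one_le_prod' fun i _ => Nat.one_le_pow _ _ (by have := hp2 i; omega)
  -- the sum is log P - log Q
  have hlog : ∀ g : Fin n → ℕ,
      Real.log ((∏ i, p i ^ g i : ℕ) : ℝ) = ∑ i, (g i : ℝ) * Real.log (p i) := by
    intro g
    push_cast
    rw [Real.log_prod]
    · exact Finset.sum_congr rfl fun i _ => by rw [Real.log_pow]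
    · intro i _
      have := hp2 i
      positivity
  have hcast : ∀ i, (k i : ℝ) = (e i : ℝ) - (f i : ℝ) := by
    intro i
    have h := Int.toNat_sub_toNat_neg (k i)
    have := congrArg (fun z : ℤ => (z : ℝ)) h
    push_cast at this
    exact this.symm
  have hS : ∑ i, (k i : ℝ) * Real.log (p i) = Real.log (P : ℝ) - Real.log (Q : ℝ) := by
    rw [hPdef, hQdef, hlog e, hlog f, ← Finset.sum_sub_distrib]
    exact Finset.sum_congr rfl fun i _ => by rw [hcast i]; ring
  -- size bounds
  have hple : ∀ i, p i ≤ n ^ 2 := by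
    intro i
    exact le_trans
      (Nat.nth_monotone Nat.infinite_setOf_prime (show i.val ≤ n - 1 by omega))
      (my_nth_prime_le n hn)
  have hea : ∑ i, e i ≤ a := by
    have hz : (∑ i, (e i : ℤ)) ≤ (a : ℤ) := by
      rw [← Finset.sum_filter_add_sum_filter_not Finset.univ (fun i => 0 < k i)]
      have h1 : ∑ i ∈ Finset.univ.filter (fun i => 0 < k i), ((e i : ℤ))
          = ∑ i ∈ Finset.univ.filter (fun i => 0 < k i), k i :=
        Finset.sum_congr rfl fun i hi =>
          Int.toNat_of_nonneg (le_of_lt (Finset.mem_filter.mp hi).2)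
      have h2 : ∑ i ∈ Finset.univ.filter (fun i => ¬ 0 < k i), ((e i : ℤ)) = 0 :=
        Finset.sum_eq_zero fun i hi => by
          have h3 : k i ≤ 0 := by have := (Finset.mem_filter.mp hi).2; omega
          simp [hedef, Int.toNat_of_nonpos h3]
      rw [h1, h2, add_zero]
      exact hpos
    exact_mod_cast hz
  have hfb : ∑ i, f i ≤ b := by
    have hz : (∑ i, (f i : ℤ)) ≤ (b : ℤ) := by
      rw [← Finset.sum_filter_add_sum_filter_not Finset.univ (fun i => k i < 0)]
      have h1 : ∑ i ∈ Finset.univ.filter (fun i => k i < 0), ((f i : ℤ))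
          = ∑ i ∈ Finset.univ.filter (fun i => k i < 0), -k i :=
        Finset.sum_congr rfl fun i hi =>
          Int.toNat_of_nonneg (by have := (Finset.mem_filter.mp hi).2; omega)
      have h2 : ∑ i ∈ Finset.univ.filter (fun i => ¬ k i < 0), ((f i : ℤ)) = 0 :=
        Finset.sum_eq_zero fun i hi => by
          have h3 : -k i ≤ 0 := by have := (Finset.mem_filter.mp hi).2; omega
          simp [hfdef, Int.toNat_of_nonpos h3]
      rw [h1, h2, add_zero]
      exact hneg
    exact_mod_cast hz
  have hbd : ∀ (g : Fin n → ℕ) (t : ℕ), t ≤ max a b → (∑ i, g i ≤ t) →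
      (∏ i, p i ^ g i) ≤ n ^ c := by
    intro g t ht hg
    calc (∏ i, p i ^ g i) ≤ ∏ i, (n ^ 2) ^ g i :=
          Finset.prod_le_prod' fun i _ => Nat.pow_le_pow_left (hple i) _
      _ = (n ^ 2) ^ (∑ i, g i) := Finset.prod_pow_eq_pow_sum _ _ _
      _ ≤ (n ^ 2) ^ (max a b) := Nat.pow_le_pow_right (by positivity) (le_trans hg ht)
      _ = n ^ c := by rw [hcdef, ← pow_mul]
  have hPle : P ≤ n ^ c := hbd e a (le_max_left a b) hea
  have hQle : Q ≤ n ^ c := hbd f b (le_max_right a b) hfb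
  -- P ≠ Q
  have hPQ : P ≠ Q := by
    intro hEq
    apply hk
    funext j
    have h1 := my_factorization n e j
    have h2 := my_factorization n f j
    rw [← hPdef] at h1
    rw [← hQdef] at h2
    rw [hEq] at h1
    rw [h1] at h2
    simp only [hedef, hfdef] at h2
    simp only [Pi.zero_apply]
    omega
  -- core analytic estimate
  have main : ∀ X Y : ℕ, 1 ≤ Y → Y < X → X ≤ n ^ c →
      ((n : ℝ) ^ (c : ℕ))⁻¹ ≤ Real.log (X : ℝ) - Real.log (Y : ℝ) := by
    intro X Y hY hYX hXc
    have hX0 : (0 : ℝ) < X := by exact_mod_cast lt_of_le_of_lt (Nat.zero_le _) hYX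
    have hY0 : (0 : ℝ) < Y := by exact_mod_cast hY
    have h1 : Real.log ((Y : ℝ) / X) ≤ (Y : ℝ) / X - 1 :=
      Real.log_le_sub_one_of_pos (by positivity)
    rw [Real.log_div (by positivity) (by positivity)] at h1
    have h2 : (1 : ℝ) / X ≤ Real.log (X : ℝ) - Real.log (Y : ℝ) := by
      have hXY : (Y : ℝ) + 1 ≤ X := by exact_mod_cast hYX
      have h3 : (Y : ℝ) / X - 1 ≤ - (1 / X) := by
        rw [div_sub' hX0.ne', ← neg_div, div_le_div_iff_of_pos_right hX0]
        linarith
      linarith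
    refine le_trans ?_ h2
    rw [one_div]
    have hXn : (X : ℝ) ≤ (n : ℝ) ^ (c : ℕ) := by exact_mod_cast hXc
    exact inv_anti₀ hX0 hXn
  -- rewrite the goal exponent
  have hgoal : (n : ℝ) ^ (-(2 * (max a b : ℤ))) = ((n : ℝ) ^ (c : ℕ))⁻¹ := by
    have h1 : (2 * (max a b : ℤ)) = ((c : ℕ) : ℤ) := by rw [hcdef]; push_cast; ring
    rw [h1, zpow_neg, zpow_natCast]
  rw [hgoal, hS]
  rcases lt_trichotomy P Q with h | h | h
  · have := main Q P hP1 h hQle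
    have h4 : Real.log (P : ℝ) - Real.log (Q : ℝ) = -(Real.log (Q : ℝ) - Real.log (P : ℝ)) := by ring
    rw [h4, abs_neg]
    exact le_trans this (le_abs_self _)
  · exact absurd h hPQ
  · exact le_trans (main P Q hQ1 h hPle) (le_abs_self _)
end

section
/- Let ℓ ≥ 2 and let c₁,…,c_{ℓ−1} be positive real numbers. Then the real symmetric ℓ×ℓ matrix C defined by C_{ii} = 1 and, for i < j, C_{ij} = C_{ji} = min(1, min_{i ≤ k ≤ j−1} c_k), is positive semidefinite. -/
open MeasureTheory

/-- Integral of the indicator of `Iic m` over `[0,1]` is `m`, for `m ∈ [0,1]`. -/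
lemma aux_int_ind (m : ℝ) (h0 : 0 ≤ m) (h1 : m ≤ 1) :
    ∫ t in (0:ℝ)..1, (if t ≤ m then (1:ℝ) else 0) = m := by
  have hfun : (fun t : ℝ => if t ≤ m then (1:ℝ) else 0)
      = Set.indicator (Set.Iic m) (fun _ => (1:ℝ)) := by
    ext t; simp [Set.indicator_apply, Set.mem_Iic]
  rw [intervalIntegral.integral_of_le zero_le_one, hfun,
    MeasureTheory.integral_indicator measurableSet_Iic]
  rw [MeasureTheory.setIntegral_const, measureReal_def, Measure.restrict_apply measurableSet_Iic]
  have hset : Set.Iic m ∩ Set.Ioc (0:ℝ) 1 = Set.Ioc 0 m := by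
    ext t
    simp only [Set.mem_inter_iff, Set.mem_Iic, Set.mem_Ioc]
    constructor
    · rintro ⟨h, h2, h3⟩; exact ⟨h2, h⟩
    · rintro ⟨h2, h⟩; exact ⟨h, h2, le_trans h h1⟩
  rw [hset, Real.volume_Ioc, smul_eq_mul, mul_one,
    ENNReal.toReal_ofReal (by linarith), sub_zero]

lemma aux_ind_integrable (m : ℝ) :
    IntervalIntegrable (fun t : ℝ => if t ≤ m then (1:ℝ) else 0) volume 0 1 := by
  have hfun : (fun t : ℝ => if t ≤ m then (1:ℝ) else 0)
      = Set.indicator (Set.Iic m) (fun _ => (1:ℝ)) := by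
    ext t; simp [Set.indicator_apply, Set.mem_Iic]
  rw [hfun, intervalIntegrable_iff]
  have hconst : IntegrableOn (fun _ : ℝ => (1:ℝ)) (Set.uIoc 0 1) volume := by
    apply (integrableOn_const_iff (by simp)).mpr
    right
    rw [Set.uIoc_of_le zero_le_one, Real.volume_Ioc]
    exact ENNReal.ofReal_lt_top
  exact hconst.indicator measurableSet_Iic

/-- Gram-type nonnegativity: the quadratic form of the matrix `[f i = f j]` is a
sum of squares. -/
lemma aux_fiber_nonneg (n : ℕ) (f : Fin n → ℕ) (hf : ∀ i, f i < n) (x : Fin n → ℝ) :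
    0 ≤ ∑ p : Fin n × Fin n, (if f p.1 = f p.2 then x p.1 * x p.2 else 0) := by
  have key : ∀ i j : Fin n,
      (∑ c ∈ Finset.range n, (if f i = c then x i else 0) * (if f j = c then x j else 0))
        = if f i = f j then x i * x j else 0 := by
    intro i j
    rw [Finset.sum_eq_single (f i)]
    · by_cases h : f i = f j <;> simp [h, eq_comm]
    · intro b _ hb; simp [Ne.symm hb]
    · intro h; exact absurd (Finset.mem_range.mpr (hf i)) h
  have : ∑ p : Fin n × Fin n, (if f p.1 = f p.2 then x p.1 * x p.2 else 0)
      = ∑ c ∈ Finset.range n, (∑ i, if f i = c then x i else 0) ^ 2 := by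
    rw [Fintype.sum_prod_type]
    have hsq : ∀ cc ∈ Finset.range n, (∑ i, if f i = cc then x i else 0) ^ 2
        = ∑ i, ∑ j, (if f i = cc then x i else 0) * (if f j = cc then x j else 0) := by
      intro cc _
      rw [sq, Finset.sum_mul]
      exact Finset.sum_congr rfl fun i _ => Finset.mul_sum _ _ _
    calc ∑ i, ∑ j, (if f i = f j then x i * x j else 0)
        = ∑ i : Fin n, ∑ j : Fin n, ∑ cc ∈ Finset.range n,
            (if f i = cc then x i else 0) * (if f j = cc then x j else 0) :=
          Finset.sum_congr rfl fun i _ => Finset.sum_congr rfl fun j _ => (key i j).symm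
      _ = ∑ i : Fin n, ∑ cc ∈ Finset.range n, ∑ j : Fin n,
            (if f i = cc then x i else 0) * (if f j = cc then x j else 0) :=
          Finset.sum_congr rfl fun i _ => Finset.sum_comm
      _ = ∑ cc ∈ Finset.range n, ∑ i : Fin n, ∑ j : Fin n,
            (if f i = cc then x i else 0) * (if f j = cc then x j else 0) :=
          Finset.sum_comm
      _ = ∑ cc ∈ Finset.range n, (∑ i, if f i = cc then x i else 0) ^ 2 :=
          Finset.sum_congr rfl fun cc hcc => (hsq cc hcc).symm
  rw [this]
  exact Finset.sum_nonneg fun c _ => sq_nonneg _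

/-- Counting function: `F a = #{k ∈ [1,a] : c k < t}`. Two indices are in the same
level-`t` component iff the counts agree. -/
lemma aux_count (c : ℕ → ℝ) (t : ℝ) (a b : ℕ) (hab : a ≤ b) :
    ((Finset.Icc 1 a).filter fun k => c k < t).card
      = ((Finset.Icc 1 b).filter fun k => c k < t).card
    ↔ ∀ k ∈ Finset.Icc (a+1) b, t ≤ c k := by
  have hunion : Finset.Icc 1 b = Finset.Icc 1 a ∪ Finset.Icc (a+1) b := by
    ext k; simp only [Finset.mem_Icc, Finset.mem_union]; omega
  have hdisj : Disjoint ((Finset.Icc 1 a).filter fun k => c k < t)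
      ((Finset.Icc (a+1) b).filter fun k => c k < t) := by
    rw [Finset.disjoint_left]
    intro k hk hk'
    simp only [Finset.mem_filter, Finset.mem_Icc] at hk hk'
    omega
  rw [hunion, Finset.filter_union, Finset.card_union_of_disjoint hdisj]
  constructor
  · intro h k hk
    have : ((Finset.Icc (a+1) b).filter fun k => c k < t).card = 0 := by omega
    rw [Finset.card_eq_zero, Finset.filter_eq_empty_iff] at this
    exact not_lt.mp (this hk)
  · intro h
    have : ((Finset.Icc (a+1) b).filter fun k => c k < t) = ∅ := by
      rw [Finset.filter_eq_empty_iff]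
      intro k hk
      exact not_lt.mpr (h k hk)
    rw [this]
    simp

/-- The covariance matrix `C` appearing in the paper: `C_{ii} = 1` and, for `i < j`,
`C_{ij} = min(1, min_{i ≤ k ≤ j-1} c_k)` (with `1`-based indices, `c` indexed by `1,…,ℓ-1`),
is positive semidefinite. -/
theorem covariance_matrix_posSemidef
    (ℓ : ℕ) (hℓ : 2 ≤ ℓ) (c : ℕ → ℝ) (hc : ∀ k, 1 ≤ k → k ≤ ℓ - 1 → 0 < c k) :
    Matrix.PosSemidef (Matrix.of fun i j : Fin ℓ =>
      if h : i = j then (1 : ℝ)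
      else min 1 ((Finset.Icc (min i.val j.val + 1) (max i.val j.val)).inf'
        (Finset.nonempty_Icc.mpr
          (by have : i.val ≠ j.val := fun hv => h (Fin.ext hv); omega)) c)) := by
  set M : Matrix (Fin ℓ) (Fin ℓ) ℝ := (Matrix.of fun i j : Fin ℓ =>
      if h : i = j then (1 : ℝ)
      else min 1 ((Finset.Icc (min i.val j.val + 1) (max i.val j.val)).inf'
        (Finset.nonempty_Icc.mpr
          (by have : i.val ≠ j.val := fun hv => h (Fin.ext hv); omega)) c)) with hM
  -- bounds on entries
  have hle1 : ∀ i j, M i j ≤ 1 := by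
    intro i j
    rw [hM]
    by_cases h : i = j <;> simp [h]
  have h0le : ∀ i j, 0 ≤ M i j := by
    intro i j
    rw [hM]
    by_cases h : i = j
    · simp [h]
    · simp only [Matrix.of_apply, dif_neg h, le_min_iff]
      refine ⟨zero_le_one, Finset.le_inf' _ _ fun k hk => ?_⟩
      rw [Finset.mem_Icc] at hk
      have hij : i.val ≠ j.val := fun hv => h (Fin.ext hv)
      have hi : i.val < ℓ := i.isLt
      have hj : j.val < ℓ := j.isLt
      exact le_of_lt (hc k (by omega) (by omega))
  -- the key pointwise description of the indicators at level t
  have hkey : ∀ t : ℝ, 0 ≤ t → t ≤ 1 → ∀ i j : Fin ℓ,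
      (if t ≤ M i j then (1:ℝ) else 0)
        = (if ((Finset.Icc 1 i.val).filter fun k => c k < t).card
            = ((Finset.Icc 1 j.val).filter fun k => c k < t).card then (1:ℝ) else 0) := by
    intro t ht0 ht1 i j
    by_cases h : i = j
    · subst h
      have hMii : M i i = 1 := by rw [hM]; simp
      rw [hMii, if_pos ht1, if_pos rfl]
    · have hij : i.val ≠ j.val := fun hv => h (Fin.ext hv)
      have hiff : t ≤ M i j ↔
          ∀ k ∈ Finset.Icc (min i.val j.val + 1) (max i.val j.val), t ≤ c k := by
        rw [hM]
        simp only [Matrix.of_apply, dif_neg h, le_min_iff, Finset.le_inf'_iff]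
        exact ⟨fun hh => hh.2, fun hh => ⟨ht1, hh⟩⟩
      have hcount := aux_count c t (min i.val j.val) (max i.val j.val)
        (min_le_max)
      rcases le_or_gt i.val j.val with hle | hlt
      · have hmin : min i.val j.val = i.val := min_eq_left hle
        have hmax : max i.val j.val = j.val := max_eq_right hle
        rw [hmin, hmax] at hiff hcount
        by_cases hcond : t ≤ M i j
        · rw [if_pos hcond, if_pos (hcount.mpr (hiff.mp hcond))]
        · rw [if_neg hcond, if_neg (fun hh => hcond (hiff.mpr (hcount.mp hh)))]
      · have hmin : min i.val j.val = j.val := min_eq_right (le_of_lt hlt)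
        have hmax : max i.val j.val = i.val := max_eq_left (le_of_lt hlt)
        rw [hmin, hmax] at hiff hcount
        by_cases hcond : t ≤ M i j
        · rw [if_pos hcond, if_pos (hcount.mpr (hiff.mp hcond)).symm]
        · rw [if_neg hcond, if_neg (fun hh => hcond (hiff.mpr (hcount.mp hh.symm)))]
  rw [Matrix.posSemidef_iff_dotProduct_mulVec]
  constructor
  · -- Hermitian
    ext i j
    simp only [Matrix.conjTranspose_apply, star_trivial, hM, Matrix.of_apply]
    by_cases h : i = j
    · subst h; simp
    · rw [dif_neg h, dif_neg (Ne.symm h)]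
      have hset : Finset.Icc (min j.val i.val + 1) (max j.val i.val)
          = Finset.Icc (min i.val j.val + 1) (max i.val j.val) := by
        rw [Nat.min_comm, Nat.max_comm]
      congr 1
      exact Finset.inf'_congr _ hset (fun _ _ => rfl)
  · intro x
    have hx : star x = x := by
      funext i; simp
    rw [hx]
    have hexpand : dotProduct x (M.mulVec x)
        = ∑ p : Fin ℓ × Fin ℓ, x p.1 * x p.2 * M p.1 p.2 := by
      rw [Fintype.sum_prod_type]
      simp only [dotProduct, Matrix.mulVec, Finset.mul_sum]
      refine Finset.sum_congr rfl fun i _ => Finset.sum_congr rfl fun j _ => ?_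
      ring
    rw [hexpand]
    have hterm : ∀ p : Fin ℓ × Fin ℓ, x p.1 * x p.2 * M p.1 p.2
        = ∫ t in (0:ℝ)..1, x p.1 * x p.2 * (if t ≤ M p.1 p.2 then (1:ℝ) else 0) := by
      intro p
      rw [intervalIntegral.integral_const_mul,
        aux_int_ind (M p.1 p.2) (h0le _ _) (hle1 _ _)]
    calc (0:ℝ) ≤ ∫ t in (0:ℝ)..1,
          ∑ p : Fin ℓ × Fin ℓ, x p.1 * x p.2 * (if t ≤ M p.1 p.2 then (1:ℝ) else 0) := by
          apply intervalIntegral.integral_nonneg zero_le_one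
          intro t ht
          rw [Set.mem_Icc] at ht
          have := aux_fiber_nonneg ℓ
            (fun i => ((Finset.Icc 1 i.val).filter fun k => c k < t).card)
            (fun i => by
              show ((Finset.Icc 1 i.val).filter fun k => c k < t).card < ℓ
              have h1 : ((Finset.Icc 1 i.val).filter fun k => c k < t).card
                  ≤ (Finset.Icc 1 i.val).card := Finset.card_filter_le _ _
              have h2 : (Finset.Icc 1 i.val).card = i.val := by rw [Nat.card_Icc]; omega
              have h3 : i.val < ℓ := i.isLt
              omega) x
          refine le_trans this (le_of_eq (Finset.sum_congr rfl fun p _ => ?_))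
          rw [hkey t ht.1 ht.2 p.1 p.2]
          by_cases h : ((Finset.Icc 1 p.1.val).filter fun k => c k < t).card
              = ((Finset.Icc 1 p.2.val).filter fun k => c k < t).card
          · simp [h]
          · simp [h]
      _ = ∑ p : Fin ℓ × Fin ℓ, x p.1 * x p.2 * M p.1 p.2 := by
          rw [intervalIntegral.integral_finset_sum]
          · exact Finset.sum_congr rfl fun p _ => (hterm p).symm
          · intro p _
            exact (aux_ind_integrable (M p.1 p.2)).const_mul _
end

section
/- Let ℓ ≥ 1 and let c₁,…,c_ℓ be positive real numbers. Then the real symmetric ℓ×ℓ matrix M defined by M_{ij} = min_{min(i,j) ≤ k ≤ max(i,j)} c_k is positive semidefinite. -/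
private lemma inf'_sub_const (s : Finset ℕ) (hs : s.Nonempty) (c : ℕ → ℝ) (m : ℝ) :
    (s.inf' hs fun k => c k - m) = s.inf' hs c - m := by
  apply le_antisymm
  · obtain ⟨k, hk, hke⟩ := s.exists_mem_eq_inf' hs c
    rw [hke]
    exact Finset.inf'_le _ hk
  · exact Finset.le_inf' hs _ fun b hb => sub_le_sub_right (Finset.inf'_le _ hb) m

private lemma key : ∀ (n a b : ℕ), b - a ≤ n → ∀ (c : ℕ → ℝ),
    (∀ k, k ∈ Finset.Ico a b → 0 ≤ c k) → ∀ x : ℕ → ℝ,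
    0 ≤ ∑ i ∈ Finset.Ico a b, ∑ j ∈ Finset.Ico a b,
      x i * ((Finset.Icc (min i j) (max i j)).inf'
        (Finset.nonempty_Icc.mpr min_le_max) c) * x j := by
  intro n
  induction n with
  | zero =>
    intro a b hab c hc x
    have : b ≤ a := by omega
    simp [Finset.Ico_eq_empty_of_le this]
  | succ n ih =>
    intro a b hab c hc x
    by_cases hba : b ≤ a
    · simp [Finset.Ico_eq_empty_of_le hba]
    push_neg at hba
    set S := Finset.Ico a b with hSdef
    have hS : S.Nonempty := Finset.nonempty_Ico.mpr hba
    set m := S.inf' hS c with hmdef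
    obtain ⟨p, hpS, hpm⟩ := S.exists_mem_eq_inf' hS c
    have hpab : a ≤ p ∧ p < b := Finset.mem_Ico.mp hpS
    have hm0 : 0 ≤ m := by
      rw [hmdef]; exact Finset.le_inf' hS c fun k hk => hc k hk
    have hmle : ∀ k ∈ S, m ≤ c k := by
      intro k hk; rw [hmdef]; exact Finset.inf'_le c hk
    -- M i j notation
    set M : ℕ → ℕ → ℝ := fun i j =>
      (Finset.Icc (min i j) (max i j)).inf' (Finset.nonempty_Icc.mpr min_le_max) c
      with hMdef
    have hsub : ∀ i ∈ S, ∀ j ∈ S, Finset.Icc (min i j) (max i j) ⊆ S := by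
      intro i hi j hj k hk
      simp only [Finset.mem_Icc] at hk
      simp only [hSdef, Finset.mem_Ico] at hi hj ⊢
      omega
    have hMge : ∀ i ∈ S, ∀ j ∈ S, m ≤ M i j := by
      intro i hi j hj
      rw [hMdef]
      exact Finset.le_inf' _ c fun k hk => hmle k (hsub i hi j hj hk)
    have hMp : ∀ i ∈ S, ∀ j ∈ S, min i j ≤ p → p ≤ max i j → M i j = m := by
      intro i hi j hj h1 h2
      refine le_antisymm ?_ (hMge i hi j hj)
      have hcp : M i j ≤ c p := by
        rw [hMdef]; exact Finset.inf'_le c (Finset.mem_Icc.mpr ⟨h1, h2⟩)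
      rw [hmdef, hpm]; exact hcp
    -- split the quadratic form
    have hsplit : ∑ i ∈ S, ∑ j ∈ S, x i * M i j * x j
        = (∑ i ∈ S, ∑ j ∈ S, x i * m * x j)
          + ∑ i ∈ S, ∑ j ∈ S, x i * (M i j - m) * x j := by
      rw [← Finset.sum_add_distrib]
      refine Finset.sum_congr rfl fun i _ => ?_
      rw [← Finset.sum_add_distrib]
      refine Finset.sum_congr rfl fun j _ => ?_
      ring
    have h1 : ∑ i ∈ S, ∑ j ∈ S, x i * m * x j = m * (∑ i ∈ S, x i) ^ 2 := by
      rw [sq, Finset.sum_mul_sum, Finset.mul_sum]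
      refine Finset.sum_congr rfl fun i _ => ?_
      rw [Finset.mul_sum]
      refine Finset.sum_congr rfl fun j _ => ?_
      ring
    -- cross terms vanish; reduce to two sub-blocks
    set L := Finset.Ico a p with hLdef
    set R := Finset.Ico (p + 1) b with hRdef
    have hLS : L ⊆ S := by
      intro k hk; simp only [hLdef, hSdef, Finset.mem_Ico] at *; omega
    have hRS : R ⊆ S := by
      intro k hk; simp only [hRdef, hSdef, Finset.mem_Ico] at *; omega
    have h2 : ∑ i ∈ S, ∑ j ∈ S, x i * (M i j - m) * x j
        = (∑ i ∈ L, ∑ j ∈ L, x i * (M i j - m) * x j)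
          + ∑ i ∈ R, ∑ j ∈ R, x i * (M i j - m) * x j := by
      rw [← Finset.sum_product', ← Finset.sum_product', ← Finset.sum_product']
      have hdisj : Disjoint (L ×ˢ L) (R ×ˢ R) := by
        rw [Finset.disjoint_left]
        rintro ⟨i, j⟩ hq hq'
        simp only [Finset.mem_product, hLdef, hRdef, Finset.mem_Ico] at hq hq'
        omega
      rw [← Finset.sum_union hdisj]
      refine (Finset.sum_subset ?_ ?_).symm
      · intro q hq
        rcases Finset.mem_union.mp hq with h | h <;>
          simp only [Finset.mem_product] at h ⊢
        · exact ⟨hLS h.1, hLS h.2⟩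
        · exact ⟨hRS h.1, hRS h.2⟩
      · rintro ⟨i, j⟩ hq hq'
        simp only [Finset.mem_product] at hq
        have hi := Finset.mem_Ico.mp hq.1
        have hj := Finset.mem_Ico.mp hq.2
        simp only [Finset.mem_union, Finset.mem_product, hLdef, hRdef,
          Finset.mem_Ico, not_or, not_and_or] at hq'
        have hmin : min i j ≤ p := by omega
        have hmax : p ≤ max i j := by omega
        rw [hMp i hq.1 j hq.2 hmin hmax]
        simp
    -- apply the induction hypothesis to the two blocks with c - m
    have hblock : ∀ a' b', a' ≤ b' → a ≤ a' → b' ≤ b → b' - a' ≤ n →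
        0 ≤ ∑ i ∈ Finset.Ico a' b', ∑ j ∈ Finset.Ico a' b', x i * (M i j - m) * x j := by
      intro a' b' h1' h2' h3' h4'
      have := ih a' b' h4' (fun k => c k - m)
        (fun k hk => by
          have : k ∈ S := by
            simp only [hSdef, Finset.mem_Ico] at *; omega
          exact sub_nonneg.mpr (hmle k this)) x
      refine le_of_le_of_eq this (Finset.sum_congr rfl fun i _ => Finset.sum_congr rfl
        fun j _ => ?_)
      rw [inf'_sub_const, hMdef]
    have hL : 0 ≤ ∑ i ∈ L, ∑ j ∈ L, x i * (M i j - m) * x j :=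
      hblock a p (by omega) (le_refl a) (by omega) (by omega)
    have hR : 0 ≤ ∑ i ∈ R, ∑ j ∈ R, x i * (M i j - m) * x j :=
      hblock (p + 1) b (by omega) (by omega) (le_refl b) (by omega)
    rw [hsplit, h1, h2]
    have : 0 ≤ m * (∑ i ∈ S, x i) ^ 2 := mul_nonneg hm0 (sq_nonneg _)
    linarith

private lemma fin_val_min {n : ℕ} (i j : Fin n) : ((min i j : Fin n) : ℕ) = min i.val j.val := by
  rcases le_total i j with h | h
  · rw [min_eq_left h, min_eq_left (show (i:ℕ) ≤ j from h)]
  · rw [min_eq_right h, min_eq_right (show (j:ℕ) ≤ i from h)]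

private lemma fin_val_max {n : ℕ} (i j : Fin n) : ((max i j : Fin n) : ℕ) = max i.val j.val := by
  rcases le_total i j with h | h
  · rw [max_eq_right h, max_eq_right (show (i:ℕ) ≤ j from h)]
  · rw [max_eq_left h, max_eq_left (show (j:ℕ) ≤ i from h)]

/-- For positive reals `c₁,…,c_ℓ`, the matrix `M_{ij} = min_{min(i,j) ≤ k ≤ max(i,j)} c_k`
is positive semidefinite. -/
theorem min_matrix_posSemidef
    (ℓ : ℕ) (hℓ : 1 ≤ ℓ) (c : Fin ℓ → ℝ) (hc : ∀ k, 0 < c k) :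
    Matrix.PosSemidef (Matrix.of fun i j : Fin ℓ =>
      (Finset.Icc (min i j) (max i j)).inf'
        (Finset.nonempty_Icc.mpr min_le_max) c) := by
  classical
  set c' : ℕ → ℝ := fun k => if h : k < ℓ then c ⟨k, h⟩ else 1 with hc'def
  have hbridge : ∀ i j : Fin ℓ,
      (Finset.Icc (min i j) (max i j)).inf' (Finset.nonempty_Icc.mpr min_le_max) c
        = (Finset.Icc (min i.val j.val) (max i.val j.val)).inf'
            (Finset.nonempty_Icc.mpr min_le_max) c' := by
    intro i j
    have hmap : Finset.Icc (min i.val j.val) (max i.val j.val)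
        = (Finset.Icc (min i j) (max i j)).map Fin.valEmbedding := by
      rw [Fin.map_valEmbedding_Icc, fin_val_min, fin_val_max]
    have e1 : (Finset.Icc (min i.val j.val) (max i.val j.val)).inf'
        (Finset.nonempty_Icc.mpr min_le_max) c'
        = (Finset.Icc (min i j) (max i j)).inf' (Finset.nonempty_Icc.mpr min_le_max)
          (c' ∘ Fin.valEmbedding) :=
      (Finset.inf'_congr _ hmap fun _ _ => rfl).trans (Finset.inf'_map _ _)
    rw [e1]
    exact Finset.inf'_congr _ rfl fun k hk => by
      simp only [Function.comp_apply, Fin.valEmbedding_apply, hc'def, Fin.is_lt,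
        dif_pos, Fin.eta]
  rw [Matrix.posSemidef_iff_dotProduct_mulVec]
  constructor
  · show _ = _
    ext i j
    simp only [Matrix.conjTranspose_apply, Matrix.of_apply, star_trivial]
    exact Finset.inf'_congr _ (by rw [min_comm, max_comm]) fun _ _ => rfl
  · intro x
    set x' : ℕ → ℝ := fun k => if h : k < ℓ then x ⟨k, h⟩ else 0 with hx'def
    have hkey := key ℓ 0 ℓ (by omega) c'
      (fun k hk => by
        have hkℓ : k < ℓ := (Finset.mem_Ico.mp hk).2
        simp only [hc'def, dif_pos hkℓ]
        exact (hc _).le) x'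
    rw [show Finset.Ico 0 ℓ = Finset.range ℓ by rw [Finset.range_eq_Ico]] at hkey
    simp only [dotProduct, Matrix.mulVec, Pi.star_apply, star_trivial,
      Matrix.of_apply]
    calc (0:ℝ) ≤ ∑ i ∈ Finset.range ℓ, ∑ j ∈ Finset.range ℓ,
          x' i * ((Finset.Icc (min i j) (max i j)).inf'
            (Finset.nonempty_Icc.mpr min_le_max) c') * x' j := hkey
      _ = ∑ i : Fin ℓ, x i * ∑ j : Fin ℓ,
            ((Finset.Icc (min i j) (max i j)).inf'
              (Finset.nonempty_Icc.mpr min_le_max) c) * x j := by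
          rw [← Fin.sum_univ_eq_sum_range (fun i => ∑ j ∈ Finset.range ℓ,
            x' i * ((Finset.Icc (min i j) (max i j)).inf'
              (Finset.nonempty_Icc.mpr min_le_max) c') * x' j)]
          refine Finset.sum_congr rfl fun i _ => ?_
          rw [← Fin.sum_univ_eq_sum_range (fun j =>
            x' i * ((Finset.Icc (min (i:ℕ) j) (max (i:ℕ) j)).inf'
              (Finset.nonempty_Icc.mpr min_le_max) c') * x' j), Finset.mul_sum]
          refine Finset.sum_congr rfl fun j _ => ?_
          rw [hbridge i j]
          simp only [hx'def, Fin.is_lt, dif_pos, Fin.eta]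
          ring
end
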